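/- The four Laurent polynomials A, σ(A), C, σ(C) ∈ S are algebraically independent over ℤ: the ℤ-algebra homomorphism from the polynomial ring ℤ[x₁,x₂,x₃,x₄] to S sending x₁ ↦ A, x₂ ↦ σ(A), x₃ ↦ C, x₄ ↦ σ(C) is injective. (This is the character-level form of the isomorphism K₀(𝒞_{ε^ℤ}) ≅ ℤ[[L(Y_{1,0})],[L(Y_{1,2})],[L(Y_{2,1})],[L(Y_{2,3})]] for U_ε^res(L sl₃) with l = 2.) -/

import Mathlib

/-!
`S = ℤ[Y10^{±1}, Y12^{±1}, Y21^{±1}, Y23^{±1}]` is the Laurent polynomial ring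
over `ℤ` in four commuting variables, realised as the group algebra of the free
abelian group `Fin 4 →₀ ℤ`; the indices `0, 1, 2, 3` correspond to the variables
`Y10, Y12, Y21, Y23` respectively (`Yin = Y_{i,ε^n}`, `ε` a primitive fourth
root of unity; this is the case `g = sl₃`, `l = 2`).
-/

/-- The Laurent polynomial ring `ℤ[Y10^{±1}, Y12^{±1}, Y21^{±1}, Y23^{±1}]`. -/
abbrev S : Type := AddMonoidAlgebra ℤ (Fin 4 →₀ ℤ)

/-- The monomial which is the `e`-th power of the `i`-th variable
(`i = 0, 1, 2, 3` for `Y10, Y12, Y21, Y23`). -/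
noncomputable def Yv (i : Fin 4) (e : ℤ) : S :=
  AddMonoidAlgebra.single (Finsupp.single i e) 1

/-- `A = Y10 + Y21·Y12⁻¹ + Y23⁻¹`, the `ε`-character of `L(Y_{1,0})`. -/
noncomputable def A : S := Yv 0 1 + Yv 2 1 * Yv 1 (-1) + Yv 3 (-1)

/-- `B`, the `ε`-character of `L(Y_{1,0}Y_{2,1})`. -/
noncomputable def B : S :=
  Yv 0 1 * Yv 2 1 + Yv 0 1 * Yv 1 1 * Yv 3 (-1) + Yv 2 1 ^ 2 * Yv 1 (-1) +
    2 * (Yv 2 1 * Yv 3 (-1)) + Yv 2 1 * Yv 0 (-1) * Yv 1 (-1) +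
    Yv 1 1 * Yv 3 (-2) + Yv 0 (-1) * Yv 3 (-1)

/-- `C = Y21 + Y12·Y23⁻¹ + Y10⁻¹`, the `ε`-character of `L(Y_{2,1})`. -/
noncomputable def C : S := Yv 2 1 + Yv 1 1 * Yv 3 (-1) + Yv 0 (-1)

/-- `Λ₁ = Y10·Y12 + Y21·Y23·Y10⁻¹·Y12⁻¹ + Y21⁻¹·Y23⁻¹`, the `ε`-character of `L(𝐘₁)`. -/
noncomputable def Lam1 : S :=
  Yv 0 1 * Yv 1 1 + Yv 2 1 * Yv 3 1 * Yv 0 (-1) * Yv 1 (-1) + Yv 2 (-1) * Yv 3 (-1)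

/-- `Λ₂ = Y21·Y23 + Y10·Y12·Y21⁻¹·Y23⁻¹ + Y10⁻¹·Y12⁻¹`, the `ε`-character of `L(𝐘₂)`. -/
noncomputable def Lam2 : S :=
  Yv 2 1 * Yv 3 1 + Yv 0 1 * Yv 1 1 * Yv 2 (-1) * Yv 3 (-1) + Yv 0 (-1) * Yv 1 (-1)

/-- The ring automorphism `σ` of `S` determined by `σ(Y10)=Y12`, `σ(Y12)=Y10`,
`σ(Y21)=Y23`, `σ(Y23)=Y21` (shift of the spectral parameter by `ε²`). -/
noncomputable def σ : S ≃ₐ[ℤ] S :=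
  AddMonoidAlgebra.domCongr ℤ ℤ
    (Finsupp.domCongr (M := ℤ) ((Equiv.swap (0 : Fin 4) 1).trans (Equiv.swap 2 3)))

section AuxIndep

open Finsupp AddMonoidAlgebra in
abbrev P : Type := AddMonoidAlgebra ℤ (Fin 4 →₀ ℕ)

noncomputable def ev (a b c d : ℕ) : Fin 4 →₀ ℕ :=
  Finsupp.single 0 a + Finsupp.single 1 b + Finsupp.single 2 c + Finsupp.single 3 d

noncomputable def evz (a b c d : ℤ) : Fin 4 →₀ ℤ :=
  Finsupp.single 0 a + Finsupp.single 1 b + Finsupp.single 2 c + Finsupp.single 3 d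

@[simp] lemma ev_apply (a b c d : ℕ) (i : Fin 4) : ev a b c d i = ![a,b,c,d] i := by
  fin_cases i <;> simp [ev]

@[simp] lemma evz_apply (a b c d : ℤ) (i : Fin 4) : evz a b c d i = ![a,b,c,d] i := by
  fin_cases i <;> simp [evz]

lemma evz_add (a b c d a' b' c' d' : ℤ) :
    evz a b c d + evz a' b' c' d' = evz (a+a') (b+b') (c+c') (d+d') := by
  simp only [evz, Finsupp.single_add]; abel

noncomputable def natz : (Fin 4 →₀ ℕ) →+ (Fin 4 →₀ ℤ) :=
  Finsupp.mapRange.addMonoidHom (Nat.castAddMonoidHom ℤ)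

lemma natz_inj : Function.Injective natz :=
  Finsupp.mapRange_injective _ (by simp) (fun a b h => by simpa using h)

lemma natz_ev (a b c d : ℕ) : natz (ev a b c d) = evz a b c d := by
  simp [natz, ev, evz, Finsupp.mapRange_add, Finsupp.mapRange_single]

noncomputable def Dg : (Fin 4 →₀ ℕ) →+ (Fin 5 →₀ ℕ) where
  toFun m := Finsupp.single 0 (m 0 + m 1 + m 2 + m 3) + m.mapDomain Fin.succ
  map_zero' := by simp
  map_add' x y := by
    simp only [Finsupp.add_apply, Finsupp.mapDomain_add, Finsupp.single_add]
    abel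

noncomputable def D (m : Fin 4 →₀ ℕ) : Lex (Fin 5 →₀ ℕ) := toLex (Dg m)

lemma D_add (a b : Fin 4 →₀ ℕ) : D (a + b) = D a + D b := by
  simp only [D, map_add]; rfl

lemma D_zero : D 0 = 0 := by simp only [D, map_zero]; rfl

lemma Dg_succ (m : Fin 4 →₀ ℕ) (i : Fin 4) : Dg m i.succ = m i := by
  simp [Dg, Finsupp.single_apply, (Fin.succ_ne_zero i).symm,
    Finsupp.mapDomain_apply (Fin.succ_injective 4)]

lemma D_inj : Function.Injective D := by
  intro x y h
  have h' : Dg x = Dg y := toLex.injective h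
  ext i
  have := congrArg (fun f : Fin 5 →₀ ℕ => f i.succ) h'
  simpa [Dg_succ] using this

lemma D_lt {x y : Fin 4 →₀ ℕ} (h : x 0 + x 1 + x 2 + x 3 < y 0 + y 1 + y 2 + y 3) :
    D x < D y := by
  rw [D, D, Finsupp.Lex.lt_iff]
  refine ⟨0, fun j hj => absurd hj (by simp [Fin.lt_def]), ?_⟩
  have h0 : ∀ z : Fin 4 →₀ ℕ, Dg z 0 = z 0 + z 1 + z 2 + z 3 := fun z => by
    simp [Dg, Finsupp.mapDomain_notin_range z (0 : Fin 5)
      (by rintro ⟨i, hi⟩; exact Fin.succ_ne_zero i hi)]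
  simpa [h0] using h

noncomputable def pA : P :=
  AddMonoidAlgebra.single (ev 1 1 0 1) 1 + AddMonoidAlgebra.single (ev 0 0 1 1) 1 +
    AddMonoidAlgebra.single (ev 0 1 0 0) 1
noncomputable def pB : P :=
  AddMonoidAlgebra.single (ev 1 1 1 0) 1 + AddMonoidAlgebra.single (ev 0 0 1 1) 1 +
    AddMonoidAlgebra.single (ev 1 0 0 0) 1
noncomputable def pC : P :=
  AddMonoidAlgebra.single (ev 1 0 1 1) 1 + AddMonoidAlgebra.single (ev 1 1 0 0) 1 +
    AddMonoidAlgebra.single (ev 0 0 0 1) 1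
noncomputable def pD : P :=
  AddMonoidAlgebra.single (ev 0 1 1 1) 1 + AddMonoidAlgebra.single (ev 1 1 0 0) 1 +
    AddMonoidAlgebra.single (ev 0 0 1 0) 1

lemma monic3 {L t u : Fin 4 →₀ ℕ} (ht : D t < D L) (hu : D u < D L) :
    (AddMonoidAlgebra.single L (1:ℤ) + AddMonoidAlgebra.single t 1 +
      AddMonoidAlgebra.single u 1).Monic D ∧
    (AddMonoidAlgebra.single L (1:ℤ) + AddMonoidAlgebra.single t 1 +
      AddMonoidAlgebra.single u 1).supDegree D = D L := by
  have hL : (AddMonoidAlgebra.single L (1:ℤ)).supDegree D = D L :=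
    AddMonoidAlgebra.supDegree_single_ne_zero _ one_ne_zero
  have hq : (AddMonoidAlgebra.single t (1:ℤ) + AddMonoidAlgebra.single u 1).supDegree D < D L := by
    refine lt_of_le_of_lt AddMonoidAlgebra.supDegree_add_le ?_
    rw [AddMonoidAlgebra.supDegree_single_ne_zero _ one_ne_zero,
      AddMonoidAlgebra.supDegree_single_ne_zero _ one_ne_zero]
    exact sup_lt_iff.2 ⟨ht, hu⟩
  rw [add_assoc]
  constructor
  · rw [AddMonoidAlgebra.Monic, AddMonoidAlgebra.leadingCoeff_add_eq_left (hL ▸ hq),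
      AddMonoidAlgebra.leadingCoeff_single D_inj]
  · rw [AddMonoidAlgebra.supDegree_add_eq_left (hL ▸ hq), hL]

lemma hpA : pA.Monic D ∧ pA.supDegree D = D (ev 1 1 0 1) :=
  monic3 (D_lt (by simp)) (D_lt (by simp))
lemma hpB : pB.Monic D ∧ pB.supDegree D = D (ev 1 1 1 0) :=
  monic3 (D_lt (by simp)) (D_lt (by simp))
lemma hpC : pC.Monic D ∧ pC.supDegree D = D (ev 1 0 1 1) :=
  monic3 (D_lt (by simp)) (D_lt (by simp))
lemma hpD : pD.Monic D ∧ pD.supDegree D = D (ev 0 1 1 1) :=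
  monic3 (D_lt (by simp)) (D_lt (by simp))

lemma pow_step {x y : P} {u w : Fin 4 →₀ ℕ}
    (hx : x.Monic D ∧ x.supDegree D = D u) (hy : y.Monic D ∧ y.supDegree D = D w) (k : ℕ) :
    (x ^ k * y).Monic D ∧ (x ^ k * y).supDegree D = D (k • u + w) := by
  have hxk : (x ^ k).Monic D := hx.1.pow D_add D_inj
  refine ⟨hxk.mul D_inj D_add hy.1, ?_⟩
  rw [hxk.supDegree_mul_of_ne_zero_right D_inj D_add hy.1.ne_zero,
    hx.1.supDegree_pow D_zero D_add D_inj, hx.2, hy.2, D_add]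
  congr 1
  exact (AddMonoidHom.map_nsmul ⟨⟨D, D_zero⟩, D_add⟩ k u).symm

noncomputable def nmon (d : ℕ) (m : Fin 4 →₀ ℕ) : Fin 4 →₀ ℕ :=
  ev (2*d - (m 1 + m 2)) (2*d - (m 0 + m 3)) (2*d - (m 1 + m 3)) (2*d - (m 0 + m 2))

noncomputable def F (d : ℕ) (m : Fin 4 →₀ ℕ) : P :=
  pA ^ (m 0) * (pB ^ (m 1) * (pC ^ (m 2) * (pD ^ (m 3) * AddMonoidAlgebra.single (nmon d m) 1)))

lemma hsingle_monic (t : Fin 4 →₀ ℕ) :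
    (AddMonoidAlgebra.single t (1:ℤ)).Monic D ∧
      (AddMonoidAlgebra.single t (1:ℤ)).supDegree D = D t :=
  ⟨by rw [AddMonoidAlgebra.Monic, AddMonoidAlgebra.leadingCoeff_single D_inj],
   AddMonoidAlgebra.supDegree_single_ne_zero _ one_ne_zero⟩

lemma hF (d : ℕ) (m : Fin 4 →₀ ℕ) (hm : m 0 + m 1 + m 2 + m 3 ≤ d) :
    (F d m).Monic D ∧ (F d m).supDegree D =
      D (ev (2*d + m 0) (2*d + m 1) (2*d + m 2) (2*d + m 3)) := by
  have h := pow_step hpA (pow_step hpB (pow_step hpC (pow_step hpD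
    (hsingle_monic (nmon d m)) (m 3)) (m 2)) (m 1)) (m 0)
  refine ⟨h.1, h.2.trans ?_⟩
  congr 1
  ext i
  fin_cases i <;>
    simp [nmon, Finsupp.smul_apply] <;> omega

noncomputable def Sv (t : Fin 4 →₀ ℤ) : S := AddMonoidAlgebra.single t 1

noncomputable def ι : P →ₐ[ℤ] S := AddMonoidAlgebra.mapDomainAlgHom ℤ ℤ natz

lemma ι_single (t : Fin 4 →₀ ℕ) (r : ℤ) :
    ι (AddMonoidAlgebra.single t r) = AddMonoidAlgebra.single (natz t) r := by
  simp [ι, AddMonoidAlgebra.mapDomainAlgHom, Finsupp.mapDomain_single]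

lemma ι_inj : Function.Injective ι :=
  AddMonoidAlgebra.mapDomain_injective natz_inj

lemma Sv_mul (s t : Fin 4 →₀ ℤ) : Sv s * Sv t = Sv (s + t) := by
  simp [Sv, AddMonoidAlgebra.single_mul_single]

lemma Sv_pow (k : ℕ) (t : Fin 4 →₀ ℤ) : Sv t ^ k = Sv (k • t) := by
  simp [Sv, AddMonoidAlgebra.single_pow]

lemma single_evz (i : Fin 4) (e : ℤ) :
    (Finsupp.single i e : Fin 4 →₀ ℤ) = evz (if i = 0 then e else 0) (if i = 1 then e else 0)
      (if i = 2 then e else 0) (if i = 3 then e else 0) := by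
  ext j; fin_cases i <;> fin_cases j <;> simp [Finsupp.single_apply]

lemma A_eq : A = Sv (evz 1 0 0 0) + Sv (evz 0 (-1) 1 0) + Sv (evz 0 0 0 (-1)) := by
  show Yv 0 1 + Yv 2 1 * Yv 1 (-1) + Yv 3 (-1) = _
  rw [Yv, Yv, Yv, Yv]
  rw [AddMonoidAlgebra.single_mul_single, one_mul]
  congr 1
  · congr 1
    · rw [Sv]; congr 1; ext j; fin_cases j <;> simp [Finsupp.single_apply]
    · rw [Sv]; congr 1; ext j; fin_cases j <;> simp [Finsupp.single_apply]
  · rw [Sv]; congr 1; ext j; fin_cases j <;> simp [Finsupp.single_apply]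

lemma C_eq : C = Sv (evz 0 0 1 0) + Sv (evz 0 1 0 (-1)) + Sv (evz (-1) 0 0 0) := by
  show Yv 2 1 + Yv 1 1 * Yv 3 (-1) + Yv 0 (-1) = _
  rw [Yv, Yv, Yv, Yv]
  rw [AddMonoidAlgebra.single_mul_single, one_mul]
  congr 1
  · congr 1
    · rw [Sv]; congr 1; ext j; fin_cases j <;> simp [Finsupp.single_apply]
    · rw [Sv]; congr 1; ext j; fin_cases j <;> simp [Finsupp.single_apply]
  · rw [Sv]; congr 1; ext j; fin_cases j <;> simp [Finsupp.single_apply]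

lemma σ_Sv (a b c d : ℤ) : σ (Sv (evz a b c d)) = Sv (evz b a d c) := by
  rw [Sv, σ, AddMonoidAlgebra.domCongr_single]
  congr 1
  ext j
  fin_cases j <;>
    simp [Finsupp.domCongr_apply, Finsupp.equivMapDomain_eq_mapDomain, evz,
      Finsupp.mapDomain_add, Finsupp.mapDomain_single, Finsupp.single_apply,
      Equiv.swap_apply_def]

lemma σA_eq : σ A = Sv (evz 0 1 0 0) + Sv (evz (-1) 0 0 1) + Sv (evz 0 0 (-1) 0) := by
  rw [A_eq, map_add, map_add, σ_Sv, σ_Sv, σ_Sv]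

lemma σC_eq : σ C = Sv (evz 0 0 0 1) + Sv (evz 1 0 (-1) 0) + Sv (evz 0 (-1) 0 0) := by
  rw [C_eq, map_add, map_add, σ_Sv, σ_Sv, σ_Sv]

lemma bridge3 {x : S} {a1 b1 c1 d1 a2 b2 c2 d2 a3 b3 c3 d3 : ℤ} {u1 u2 u3 u4 : ℤ}
    (hx : x = Sv (evz a1 b1 c1 d1) + Sv (evz a2 b2 c2 d2) + Sv (evz a3 b3 c3 d3))
    (t1 t2 t3 : Fin 4 →₀ ℕ)
    (h1 : natz t1 = evz (a1+u1) (b1+u2) (c1+u3) (d1+u4))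
    (h2 : natz t2 = evz (a2+u1) (b2+u2) (c2+u3) (d2+u4))
    (h3 : natz t3 = evz (a3+u1) (b3+u2) (c3+u3) (d3+u4)) :
    x * Sv (evz u1 u2 u3 u4) =
      ι (AddMonoidAlgebra.single t1 1 + AddMonoidAlgebra.single t2 1 +
         AddMonoidAlgebra.single t3 1) := by
  rw [hx, add_mul, add_mul, Sv_mul, Sv_mul, Sv_mul, evz_add, evz_add, evz_add,
    map_add, map_add, ι_single, ι_single, ι_single, h1, h2, h3]
  rfl

lemma bridgeA : A * Sv (evz 0 1 0 1) = ι pA :=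
  bridge3 A_eq _ _ _ (by rw [natz_ev]; norm_num) (by rw [natz_ev]; norm_num)
    (by rw [natz_ev]; norm_num)

lemma bridgeB : σ A * Sv (evz 1 0 1 0) = ι pB :=
  bridge3 σA_eq _ _ _ (by rw [natz_ev]; norm_num) (by rw [natz_ev]; norm_num)
    (by rw [natz_ev]; norm_num)

lemma bridgeC : C * Sv (evz 1 0 0 1) = ι pC :=
  bridge3 C_eq _ _ _ (by rw [natz_ev]; norm_num) (by rw [natz_ev]; norm_num)
    (by rw [natz_ev]; norm_num)

lemma bridgeD : σ C * Sv (evz 0 1 1 0) = ι pD :=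
  bridge3 σC_eq _ _ _ (by rw [natz_ev]; norm_num) (by rw [natz_ev]; norm_num)
    (by rw [natz_ev]; norm_num)

lemma key (d : ℕ) (m : Fin 4 →₀ ℕ) (hm : m 0 + m 1 + m 2 + m 3 ≤ d) :
    A ^ (m 0) * (σ A) ^ (m 1) * C ^ (m 2) * (σ C) ^ (m 3) * Sv (evz 1 1 1 1) ^ (2*d) =
      ι (F d m) := by
  have expand : ι (F d m) =
      (A * Sv (evz 0 1 0 1)) ^ (m 0) * ((σ A * Sv (evz 1 0 1 0)) ^ (m 1) *
        ((C * Sv (evz 1 0 0 1)) ^ (m 2) * ((σ C * Sv (evz 0 1 1 0)) ^ (m 3) *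
          Sv (natz (nmon d m))))) := by
    rw [F, map_mul, map_mul, map_mul, map_mul, map_pow, map_pow, map_pow, map_pow,
      bridgeA, bridgeB, bridgeC, bridgeD, ι_single]
    rfl
  rw [expand]
  have hmono : Sv (evz 0 1 0 1) ^ (m 0) * (Sv (evz 1 0 1 0) ^ (m 1) *
      (Sv (evz 1 0 0 1) ^ (m 2) * (Sv (evz 0 1 1 0) ^ (m 3) * Sv (natz (nmon d m))))) =
      Sv (evz 1 1 1 1) ^ (2*d) := by
    rw [Sv_pow, Sv_pow, Sv_pow, Sv_pow, Sv_pow, Sv_mul, Sv_mul, Sv_mul, Sv_mul]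
    congr 1
    rw [nmon, natz_ev]
    ext i
    fin_cases i <;>
      simp [Finsupp.smul_apply, smul_eq_mul] <;> push_cast <;> omega
  rw [mul_pow, mul_pow, mul_pow, mul_pow, ← hmono]
  ring

lemma algebraMap_P (c : ℤ) : algebraMap ℤ P c = AddMonoidAlgebra.single 0 c := by
  rw [AddMonoidAlgebra.coe_algebraMap]; simp


end AuxIndep

/-- The four fundamental characters `A, σ(A), C, σ(C)` are algebraically
independent over `ℤ`: the `ℤ`-algebra homomorphism `ℤ[x₁,x₂,x₃,x₄] → S` sending
`x₁ ↦ A`, `x₂ ↦ σ(A)`, `x₃ ↦ C`, `x₄ ↦ σ(C)` is injective. -/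
theorem fundamental_characters_independent :
    Function.Injective
      (MvPolynomial.aeval (fun i : Fin 4 => ![A, σ A, C, σ C] i) :
        MvPolynomial (Fin 4) ℤ →ₐ[ℤ] S) := by
  rw [injective_iff_map_eq_zero]
  intro p hp
  by_contra hp0
  set d := p.totalDegree with hd
  have hsupp : ∀ m ∈ p.support, m 0 + m 1 + m 2 + m 3 ≤ d := by
    intro m hm
    have := MvPolynomial.le_totalDegree hm
    rwa [Finsupp.sum_fintype _ _ (fun i => rfl), Fin.sum_univ_four] at this
  set f : (Fin 4 →₀ ℕ) → P := fun m => algebraMap ℤ P (MvPolynomial.coeff m p) * F d m with hf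
  -- each term is nonzero with prescribed supDegree
  have hterm : ∀ m ∈ p.support, f m ≠ 0 ∧
      (f m).supDegree D = D (ev (2*d + m 0) (2*d + m 1) (2*d + m 2) (2*d + m 3)) := by
    intro m hm
    have hc : MvPolynomial.coeff m p ≠ 0 := MvPolynomial.mem_support_iff.1 hm
    have hFm := hF d m (hsupp m hm)
    have hlc : (f m).leadingCoeff D = MvPolynomial.coeff m p := by
      rw [hf, AddMonoidAlgebra.leadingCoeff_mul D_inj D_add, hFm.1, mul_one,
        algebraMap_P, AddMonoidAlgebra.leadingCoeff_single D_inj]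
    have hne : f m ≠ 0 := by
      rw [← AddMonoidAlgebra.leadingCoeff_ne_zero D_inj, hlc]; exact hc
    refine ⟨hne, ?_⟩
    rw [hf]
    show (algebraMap ℤ P (MvPolynomial.coeff m p) * F d m).supDegree D = _
    rw [AddMonoidAlgebra.supDegree_mul D_inj D_add
        (by rw [hFm.1, mul_one, algebraMap_P, AddMonoidAlgebra.leadingCoeff_single D_inj]; exact hc)
        (by rw [algebraMap_P]; exact fun h => hc (AddMonoidAlgebra.single_eq_zero.1 h)) hFm.1.ne_zero,
      algebraMap_P, AddMonoidAlgebra.supDegree_single_ne_zero _ hc, hFm.2, D_zero, zero_add]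
  have hq : (∑ m ∈ p.support, f m) ≠ 0 := by
    obtain ⟨m0, hm0⟩ := MvPolynomial.support_nonempty.2 hp0
    refine AddMonoidAlgebra.sum_ne_zero_of_injOn_supDegree' (D := D) ⟨m0, hm0, (hterm m0 hm0).1⟩ ?_
    intro m hm m' hm' he
    simp only [Function.comp_apply] at he
    rw [(hterm m hm).2, (hterm m' hm').2] at he
    have hDe := D_inj he
    have h4 : ∀ i : Fin 4, 2*d + m i = 2*d + m' i := fun i => by
      have := congrArg (fun z : Fin 4 →₀ ℕ => z i) hDe
      simp only [ev_apply] at this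
      fin_cases i <;> simpa using this
    ext i
    have := h4 i
    omega
  apply hq
  apply ι_inj
  rw [map_zero, map_sum]
  have hterm' : ∀ m ∈ p.support, ι (f m) =
      algebraMap ℤ S (MvPolynomial.coeff m p) *
        (A ^ m 0 * σ A ^ m 1 * C ^ m 2 * σ C ^ m 3) * Sv (evz 1 1 1 1) ^ (2*d) := by
    intro m hm
    show ι (algebraMap ℤ P (MvPolynomial.coeff m p) * F d m) = _
    rw [map_mul, AlgHom.commutes, ← key d m (hsupp m hm)]
    ring
  rw [Finset.sum_congr rfl hterm', ← Finset.sum_mul]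
  have haeval : ∑ m ∈ p.support, algebraMap ℤ S (MvPolynomial.coeff m p) *
      (A ^ m 0 * σ A ^ m 1 * C ^ m 2 * σ C ^ m 3) =
      (MvPolynomial.aeval (fun i : Fin 4 => ![A, σ A, C, σ C] i)) p := by
    rw [MvPolynomial.aeval_def, MvPolynomial.eval₂_eq']
    refine Finset.sum_congr rfl fun m _ => ?_
    congr 1
    rw [Fin.prod_univ_four]
    simp
  rw [haeval, hp, zero_mul]
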